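/- arXiv:2304.04641 — 2 statements merged into one kernel-verified Lean document; each statement's English description precedes it below -/
import Mathlib

section
/- Under the two-sided Lipschitz assumption and the optimization-regret assumption, if Δ_up ≥ 2·c_2·c_b/(c_a·√T), then the time-and-batch averaged recovery error satisfies (1/n)∑_{i=1}^n (1/T)∑_{t=1}^T ‖X_{t,i} − X_i‖ ≥ (c_a/2)·Δ_up. -/
/-- Recovery-error lower bound: under the two-sided Lipschitz assumption and the
optimization-regret assumption, if `Δ_up ≥ 2 c₂ c_b / (c_a √T)` then the time-and-batch
averaged recovery error is at least `(c_a / 2) * Δ_up`. -/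
theorem stmt5 {E F : Type*} [NormedAddCommGroup E] [NormedSpace ℝ E]
    [NormedAddCommGroup F] [NormedSpace ℝ F]
    (n T : ℕ) (hn : 0 < n) (hT : 0 < T)
    (Xrec : Fin T → Fin n → E) (Xtrue Xtil : Fin n → E)
    (G : Fin n → E → F)
    (ca cb c2 Δup : ℝ) (hca : 0 < ca) (hcb : 0 < cb) (hc2 : 0 ≤ c2)
    (hLipLow : ∀ i x x', ca * ‖G i x - G i x'‖ ≤ ‖x - x'‖)
    (hLipUp : ∀ i x x', ‖x - x'‖ ≤ cb * ‖G i x - G i x'‖)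
    (hreg : (1/(T:ℝ)) * ∑ t, (1/(n:ℝ)) * ∑ i, ‖G i (Xrec t i) - G i (Xtil i)‖
              ≤ c2 / Real.sqrt T)
    (hΔ : Δup = ‖(1/(n:ℝ)) • ∑ i, (G i (Xtil i) - G i (Xtrue i))‖)
    (hbig : 2 * c2 * cb / (ca * Real.sqrt T) ≤ Δup) :
    (ca/2) * Δup ≤ (1/(n:ℝ)) * ∑ i, (1/(T:ℝ)) * ∑ t, ‖Xrec t i - Xtrue i‖ := by
  have hT' : (0:ℝ) < T := by exact_mod_cast hT
  have hn' : (0:ℝ) < n := by exact_mod_cast hn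
  have hsT : 0 < Real.sqrt T := Real.sqrt_pos.mpr hT'
  have hΔ0 : 0 ≤ Δup := by rw [hΔ]; exact norm_nonneg _
  -- swap the sums in the goal
  have hswap : (1/(n:ℝ)) * ∑ i, (1/(T:ℝ)) * ∑ t, ‖Xrec t i - Xtrue i‖
      = (1/(T:ℝ)) * ∑ t, (1/(n:ℝ)) * ∑ i, ‖Xrec t i - Xtrue i‖ := by
    simp only [Finset.mul_sum]
    rw [Finset.sum_comm]
    exact Finset.sum_congr rfl fun t _ => Finset.sum_congr rfl fun i _ => by ring
  rw [hswap]
  -- Δup ≤ average of ‖G Xtil - G Xtrue‖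
  have hΔle : Δup ≤ (1/(n:ℝ)) * ∑ i, ‖G i (Xtil i) - G i (Xtrue i)‖ := by
    rw [hΔ, norm_smul, Real.norm_eq_abs, abs_of_nonneg (by positivity)]
    exact mul_le_mul_of_nonneg_left (norm_sum_le _ _) (by positivity)
  -- pointwise-in-t key inequality
  have key : ∀ t, ca * Δup - ca * ((1/(n:ℝ)) * ∑ i, ‖G i (Xrec t i) - G i (Xtil i)‖)
      ≤ (1/(n:ℝ)) * ∑ i, ‖Xrec t i - Xtrue i‖ := by
    intro t
    have h2 : Δup ≤ (1/(n:ℝ)) * ∑ i, ‖G i (Xrec t i) - G i (Xtil i)‖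
        + (1/(n:ℝ)) * ∑ i, ‖G i (Xrec t i) - G i (Xtrue i)‖ := by
      refine hΔle.trans ?_
      rw [← mul_add, ← Finset.sum_add_distrib]
      refine mul_le_mul_of_nonneg_left (Finset.sum_le_sum fun i _ => ?_) (by positivity)
      calc ‖G i (Xtil i) - G i (Xtrue i)‖
          ≤ ‖G i (Xtil i) - G i (Xrec t i)‖ + ‖G i (Xrec t i) - G i (Xtrue i)‖ :=
            norm_sub_le_norm_sub_add_norm_sub _ _ _
        _ = ‖G i (Xrec t i) - G i (Xtil i)‖ + ‖G i (Xrec t i) - G i (Xtrue i)‖ := by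
            rw [norm_sub_rev]
    have h3 : ca * ((1/(n:ℝ)) * ∑ i, ‖G i (Xrec t i) - G i (Xtrue i)‖)
        ≤ (1/(n:ℝ)) * ∑ i, ‖Xrec t i - Xtrue i‖ := by
      rw [mul_left_comm, Finset.mul_sum]
      exact mul_le_mul_of_nonneg_left
        (Finset.sum_le_sum fun i _ => hLipLow i _ _) (by positivity)
    nlinarith [h2, h3]
  -- average over t
  have havg : ca * Δup - ca * ((1/(T:ℝ)) * ∑ t, (1/(n:ℝ)) * ∑ i, ‖G i (Xrec t i) - G i (Xtil i)‖)
      ≤ (1/(T:ℝ)) * ∑ t, (1/(n:ℝ)) * ∑ i, ‖Xrec t i - Xtrue i‖ := by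
    set SA := ∑ t, (1/(n:ℝ)) * ∑ i, ‖G i (Xrec t i) - G i (Xtil i)‖ with hSA
    set SB := ∑ t, (1/(n:ℝ)) * ∑ i, ‖Xrec t i - Xtrue i‖ with hSB
    have hs : ∑ t : Fin T, (ca * Δup - ca * ((1/(n:ℝ)) * ∑ i, ‖G i (Xrec t i) - G i (Xtil i)‖))
        ≤ SB := Finset.sum_le_sum fun t _ => key t
    have hs' : (T:ℝ) * (ca * Δup) - ca * SA ≤ SB := by
      simpa [Finset.sum_sub_distrib, Finset.sum_const, Finset.card_univ, nsmul_eq_mul,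
        ← Finset.mul_sum, hSA] using hs
    have h4 := mul_le_mul_of_nonneg_left hs' (one_div_pos.mpr hT').le
    have heq : ca * Δup - ca * ((1/(T:ℝ)) * SA)
        = (1/(T:ℝ)) * ((T:ℝ) * (ca * Δup) - ca * SA) := by
      field_simp
    rw [heq]; exact h4
  -- ca ≤ cb or everything trivial
  by_cases hconst : ∀ i x x', G i x = G i x'
  · have hΔ0' : Δup = 0 := by
      rw [hΔ]
      have : ∀ i ∈ Finset.univ, G i (Xtil i) - G i (Xtrue i) = (0:F) := fun i _ => by
        rw [hconst i (Xtil i) (Xtrue i)]; simp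
      rw [Finset.sum_congr rfl this]; simp
    rw [hΔ0']
    have : (0:ℝ) ≤ (1/(T:ℝ)) * ∑ t, (1/(n:ℝ)) * ∑ i, ‖Xrec t i - Xtrue i‖ := by positivity
    linarith
  · push_neg at hconst
    obtain ⟨i, x, x', hne⟩ := hconst
    have hgpos : 0 < ‖G i x - G i x'‖ := by
      rw [norm_pos_iff, sub_ne_zero]; exact hne
    have hcacb : ca ≤ cb :=
      le_of_mul_le_mul_right (le_trans (hLipLow i x x') (hLipUp i x x')) hgpos
    -- from hbig : 2*c2 ≤ Δup * √T
    have hbig' : 2 * c2 * cb ≤ Δup * (ca * Real.sqrt T) := by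
      rw [div_le_iff₀ (by positivity)] at hbig; linarith
    have h5 : ca * (c2 / Real.sqrt T) ≤ ca * Δup / 2 := by
      have h6 : c2 / Real.sqrt T ≤ Δup / 2 := by
        rw [div_le_div_iff₀ hsT two_pos]
        nlinarith [mul_nonneg hc2 (sub_nonneg.mpr hcacb)]
      have := mul_le_mul_of_nonneg_left h6 hca.le
      linarith
    have hreg' : ca * ((1/(T:ℝ)) * ∑ t, (1/(n:ℝ)) * ∑ i, ‖G i (Xrec t i) - G i (Xtil i)‖)
        ≤ ca * (c2 / Real.sqrt T) := mul_le_mul_of_nonneg_left hreg hca.le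
    linarith
end

section
/- Let D_prot = {Z_1,...,Z_n} be n i.i.d. samples from distribution P over a domain partitioned into N cells of λ-cover, and suppose the loss L is C-Lipschitz in both the parameter and data arguments with |L(θ+δ, Z)| ≤ M for all Z. Then with probability at least 1 − η, the utility loss satisfies |E_{Z∼P}[L(θ+δ, Z)] − (1/n)∑_{i=1}^n L(θ, Z_i)| ≤ C·λ + C·‖δ‖ + M·√((2N·ln 2 + 2·ln(1/η))/n). -/
open MeasureTheory ProbabilityTheory Real


lemma bhc_aux {p : ℝ} (hp0 : 0 ≤ p) (hp1 : p ≤ 1) (s : ℝ) :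
    Real.log (1 - p + p * Real.exp s) ≤ p * s + s ^ 2 / 8 := by
  set d : ℝ → ℝ := fun x => 1 - p + p * Real.exp x with hd_def
  have hd : ∀ x, 0 < d x := by
    intro x
    rcases hp1.eq_or_lt with h | h
    · simp [hd_def, h, exp_pos]
    · have : 0 < 1 - p := by linarith
      have : 0 ≤ p * Real.exp x := mul_nonneg hp0 (exp_pos x).le
      simp only [hd_def]; linarith
  set F : ℝ → ℝ := fun x => x ^ 2 / 8 + p * x - Real.log (d x) with hF_def
  set G : ℝ → ℝ := fun x => x / 4 + p - p * Real.exp x / d x with hG_def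
  have hd' : ∀ x, HasDerivAt d (p * Real.exp x) x := fun x =>
    ((Real.hasDerivAt_exp x).const_mul p).const_add (1 - p)
  have hF' : ∀ x, HasDerivAt F (G x) x := by
    intro x
    have h1 : HasDerivAt (fun y : ℝ => y ^ 2 / 8) (x / 4) x := by
      exact ((hasDerivAt_pow 2 x).div_const 8).congr_deriv (by push_cast; ring)
    have h2 : HasDerivAt (fun y : ℝ => p * y) p x := by
      simpa using (hasDerivAt_id x).const_mul p
    have h3 : HasDerivAt (fun y => Real.log (d y)) (p * Real.exp x / d x) x :=
      (hd' x).log (hd x).ne'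
    exact ((h1.add h2).sub h3)
  have hG' : ∀ x, HasDerivAt G (1 / 4 - (p * Real.exp x * d x - (p * Real.exp x) ^ 2) / (d x) ^ 2) x := by
    intro x
    have h1 : HasDerivAt (fun y : ℝ => y / 4 + p) (1 / 4) x := by
      simpa using ((hasDerivAt_id x).div_const 4).add_const p
    have h2 : HasDerivAt (fun y => p * Real.exp y / d y)
        ((p * Real.exp x * d x - p * Real.exp x * (p * Real.exp x)) / (d x) ^ 2) x :=
      ((Real.hasDerivAt_exp x).const_mul p).div (hd' x) (hd x).ne'
    have := h1.sub h2
    exact this.congr_deriv (by ring)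
  have hG'nonneg : ∀ x, 0 ≤ 1 / 4 - (p * Real.exp x * d x - (p * Real.exp x) ^ 2) / (d x) ^ 2 := by
    intro x
    rw [sub_nonneg, div_le_iff₀ (pow_pos (hd x) 2)]
    nlinarith [sq_nonneg (d x / 2 - p * Real.exp x)]
  have hGmono : Monotone G :=
    monotone_of_deriv_nonneg (fun x => (hG' x).differentiableAt)
      (fun x => by rw [(hG' x).deriv]; exact hG'nonneg x)
  have hG0 : G 0 = 0 := by simp [hG_def, hd_def]
  have hF0 : F 0 = 0 := by simp [hF_def, hd_def]
  have hFcont : Continuous F := by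
    rw [continuous_iff_continuousAt]
    exact fun x => (hF' x).differentiableAt.continuousAt
  have key : ∀ x, 0 ≤ F x := by
    intro x
    rcases lt_trichotomy x 0 with hx | hx | hx
    · obtain ⟨c, hc, hceq⟩ := exists_hasDerivAt_eq_slope F G hx
        (hFcont.continuousOn) (fun y _ => hF' y)
      have hGc : G c ≤ 0 := hG0 ▸ hGmono hc.2.le
      rw [hceq] at hGc
      rw [hF0] at hGc
      have hpos : 0 < 0 - x := by linarith
      rw [div_nonpos_iff] at hGc
      rcases hGc with ⟨h1, h2⟩ | ⟨h1, _⟩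
      · linarith
      · linarith
    · simp [hx, hF0]
    · obtain ⟨c, hc, hceq⟩ := exists_hasDerivAt_eq_slope F G hx
        (hFcont.continuousOn) (fun y _ => hF' y)
      have hGc : 0 ≤ G c := hG0 ▸ hGmono hc.1.le
      rw [hceq] at hGc
      rw [hF0] at hGc
      rw [le_div_iff₀ (by linarith)] at hGc
      linarith
  have := key s
  simp only [hF_def] at this
  linarith

lemma integrable_exp_bdd {Ω : Type*} [MeasurableSpace Ω] {μ : Measure Ω}
    [IsProbabilityMeasure μ] {X : Ω → ℝ} {a b : ℝ}
    (hXm : AEStronglyMeasurable X μ) (hab : ∀ᵐ ω ∂μ, X ω ∈ Set.Icc a b) (t : ℝ) :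
    Integrable (fun ω => Real.exp (t * X ω)) μ := by
  refine Integrable.mono' (integrable_const (Real.exp (|t| * (|a| + |b|)))) ?_ ?_
  · exact Real.continuous_exp.comp_aestronglyMeasurable (hXm.const_mul t)
  · filter_upwards [hab] with ω hω
    rw [Real.norm_eq_abs, abs_of_pos (Real.exp_pos _), Real.exp_le_exp]
    have h1 : |X ω| ≤ |a| + |b| := by
      rcases hω with ⟨h1, h2⟩
      rw [abs_le]
      constructor
      · have h3 := neg_abs_le a
        have h4 := abs_nonneg b
        linarith
      · have h3 := le_abs_self b
        have h4 := abs_nonneg a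
        linarith
    calc t * X ω ≤ |t * X ω| := le_abs_self _
      _ = |t| * |X ω| := abs_mul _ _
      _ ≤ |t| * (|a| + |b|) := by gcongr

lemma hoeffding_mgf {Ω : Type*} [MeasurableSpace Ω] (μ : Measure Ω)
    [IsProbabilityMeasure μ] (X : Ω → ℝ) (a b t : ℝ)
    (hX : Integrable X μ) (hmean : ∫ ω, X ω ∂μ = 0)
    (hab : ∀ᵐ ω ∂μ, X ω ∈ Set.Icc a b) :
    ∫ ω, Real.exp (t * X ω) ∂μ ≤ Real.exp (t ^ 2 * (b - a) ^ 2 / 8) := by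
  -- a ≤ 0 ≤ b
  have ha0 : a ≤ 0 := by
    rw [← hmean]
    have : ∫ _ : Ω, a ∂μ ≤ ∫ ω, X ω ∂μ := by
      refine integral_mono_ae (integrable_const a) hX ?_
      filter_upwards [hab] with ω hω using hω.1
    simpa using this
  have hb0 : 0 ≤ b := by
    rw [← hmean]
    have : ∫ ω, X ω ∂μ ≤ ∫ _ : Ω, b ∂μ := by
      refine integral_mono_ae hX (integrable_const b) ?_
      filter_upwards [hab] with ω hω using hω.2
    simpa using this
  rcases eq_or_lt_of_le (ha0.trans hb0) with hab_eq | hab_lt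
  · -- a = b = 0, X = 0 a.e.
    have ha : a = 0 := by linarith
    have hb : b = 0 := by linarith
    have hXae : ∀ᵐ ω ∂μ, Real.exp (t * X ω) = 1 := by
      filter_upwards [hab] with ω hω
      rcases hω with ⟨hh1, hh2⟩
      have : X ω = 0 := le_antisymm (hb ▸ hh2) (ha ▸ hh1)
      simp [this]
    rw [integral_congr_ae hXae]
    simp only [integral_const, probReal_univ, smul_eq_mul, one_mul]
    exact Real.one_le_exp (by positivity)
  · -- a < b
    set p : ℝ := -a / (b - a) with hp_def
    set s : ℝ := t * (b - a) with hs_def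
    have hba : (0:ℝ) < b - a := by linarith
    have hp0 : 0 ≤ p := div_nonneg (by linarith) hba.le
    have hp1 : p ≤ 1 := by
      rw [div_le_one hba]; linarith
    set c1 : ℝ := (b * Real.exp (t * a) - a * Real.exp (t * b)) / (b - a) with hc1_def
    set c2 : ℝ := (Real.exp (t * b) - Real.exp (t * a)) / (b - a) with hc2_def
    have hptw : ∀ᵐ ω ∂μ, Real.exp (t * X ω) ≤ c1 + c2 * X ω := by
      filter_upwards [hab] with ω hω
      rcases hω with ⟨h1, h2⟩
      have hw1 : (0:ℝ) ≤ (b - X ω) / (b - a) := div_nonneg (by linarith) hba.le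
      have hw2 : (0:ℝ) ≤ (X ω - a) / (b - a) := div_nonneg (by linarith) hba.le
      have hwsum : (b - X ω) / (b - a) + (X ω - a) / (b - a) = 1 := by
        field_simp
        ring
      have hconv := convexOn_exp.2 (Set.mem_univ (t * a)) (Set.mem_univ (t * b))
        hw1 hw2 hwsum
      have harg : ((b - X ω) / (b - a)) • (t * a) + ((X ω - a) / (b - a)) • (t * b) = t * X ω := by
        simp only [smul_eq_mul]
        field_simp
        ring
      rw [harg] at hconv
      refine hconv.trans (le_of_eq ?_)
      simp only [smul_eq_mul, hc1_def, hc2_def]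
      field_simp
      ring
    have hint_exp : Integrable (fun ω => Real.exp (t * X ω)) μ :=
      integrable_exp_bdd hX.aestronglyMeasurable hab t
    have hint_lin : Integrable (fun ω => c1 + c2 * X ω) μ :=
      (integrable_const c1).add (hX.const_mul c2)
    have hstep1 : ∫ ω, Real.exp (t * X ω) ∂μ ≤ c1 := by
      have := integral_mono_ae hint_exp hint_lin hptw
      rwa [integral_add (integrable_const c1) (hX.const_mul c2), integral_const_mul,
        hmean, mul_zero, add_zero, integral_const, probReal_univ,
        smul_eq_mul, one_mul] at this
    -- c1 = exp(t*a) * (1 - p + p * exp s)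
    have hc1_eq : c1 = Real.exp (t * a) * (1 - p + p * Real.exp s) := by
      rw [hc1_def, hp_def, hs_def]
      rw [show t * (b - a) = t * b - t * a by ring, Real.exp_sub]
      field_simp
      ring
    have hd_pos : (0:ℝ) < 1 - p + p * Real.exp s := by
      rcases hp1.lt_or_eq with h | h
      · have : 0 ≤ p * Real.exp s := mul_nonneg hp0 (Real.exp_pos s).le
        linarith
      · have hp_pos : (0:ℝ) < p := by rw [h]; exact one_pos
        have := mul_pos hp_pos (Real.exp_pos s)
        linarith
    have hlog := bhc_aux hp0 hp1 s
    rw [Real.log_le_iff_le_exp hd_pos] at hlog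
    have : c1 ≤ Real.exp (t * a) * Real.exp (p * s + s ^ 2 / 8) := by
      rw [hc1_eq]
      exact mul_le_mul_of_nonneg_left hlog (Real.exp_pos _).le
    rw [← Real.exp_add] at this
    have harg : t * a + (p * s + s ^ 2 / 8) = t ^ 2 * (b - a) ^ 2 / 8 := by
      rw [hp_def, hs_def]
      field_simp
      ring
    rw [harg] at this
    exact hstep1.trans this

/-- Utility loss upper bound: for `n` i.i.d. samples from `P`, a loss `L` that is
`C`-Lipschitz in both arguments and bounded by `M` at the distorted parameter, and a
partition of the domain into `N` cells of a `λ`-cover, with probability at least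
`1 - η` the utility loss `|E_{Z∼P}[L(θ+δ, Z)] - (1/n)∑ L(θ, Z_i)|` is at most
`C λ + C ‖δ‖ + M √((2N ln 2 + 2 ln(1/η))/n)`. -/
theorem stmt17 {Θ E Ω : Type*} [NormedAddCommGroup Θ] [MetricSpace E] [MeasurableSpace E]
    [MeasurableSpace Ω]
    (P : Measure E) [IsProbabilityMeasure P]
    (μ : Measure Ω) [IsProbabilityMeasure μ]
    (L : Θ → E → ℝ) (C M lam η : ℝ)
    (hC : 0 ≤ C) (hM : 0 ≤ M) (hη : 0 < η) (hη1 : η < 1)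
    (θ δθ : Θ) (hlam : ‖δθ‖ < lam)
    (hLipθ : ∀ θ1 θ2 z, |L θ1 z - L θ2 z| ≤ C * ‖θ1 - θ2‖)
    (hLipz : ∀ θ' z z', |L θ' z - L θ' z'| ≤ C * dist z z')
    (hbound : ∀ z, |L (θ + δθ) z| ≤ M)
    (N : ℕ) (hN : 0 < N) (Cell : Fin N → Set E)
    (hCellMeas : ∀ i, MeasurableSet (Cell i))
    (hCellCover : (⋃ i, Cell i) = Set.univ)
    (hCellDisj : Pairwise (Function.onFun Disjoint Cell))
    (hCellDiam : ∀ i, ∀ z ∈ Cell i, ∀ z' ∈ Cell i, dist z z' ≤ lam)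
    (hInt : Integrable (L (θ + δθ)) P)
    (n : ℕ) (hn : 0 < n) (Z : Fin n → Ω → E)
    (hZmeas : ∀ i, Measurable (Z i))
    (hZlaw : ∀ i, μ.map (Z i) = P)
    (hZindep : iIndepFun Z μ) :
    ENNReal.ofReal (1 - η) ≤
      μ {ω | |(∫ z, L (θ + δθ) z ∂P) - (1/(n:ℝ)) * ∑ i, L θ (Z i ω)|
        ≤ C * lam + C * ‖δθ‖
          + M * Real.sqrt ((2*N*Real.log 2 + 2*Real.log (1/η))/n)} := by
  classical
  have hnpos : (0:ℝ) < n := Nat.cast_pos.mpr hn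
  have hlam0 : 0 ≤ lam := (norm_nonneg δθ).trans hlam.le
  set f : E → ℝ := L (θ + δθ) with hf_def
  set m : ℝ := ∫ z, f z ∂P with hm_def
  set v : ℝ := (2*N*Real.log 2 + 2*Real.log (1/η))/n with hv_def
  set s0 : ℝ := M * Real.sqrt v with hs0_def
  -- v > 0
  have hlog2 : (0:ℝ) < Real.log 2 := Real.log_pos one_lt_two
  have hlogη : (0:ℝ) < Real.log (1/η) := Real.log_pos (by rw [lt_div_iff₀ hη]; linarith)
  have hN1 : (1:ℝ) ≤ N := by exact_mod_cast hN
  have hv_pos : 0 < v := by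
    rw [hv_def]
    apply div_pos _ hnpos
    nlinarith
  have hs0_nonneg : 0 ≤ s0 := mul_nonneg hM (Real.sqrt_nonneg _)
  -- step 1: reduce to the f-version set
  have hsubset : {ω | |m - (1/(n:ℝ)) * ∑ i, f (Z i ω)| ≤ s0} ⊆
      {ω | |m - (1/(n:ℝ)) * ∑ i, L θ (Z i ω)| ≤ C * lam + C * ‖δθ‖ + s0} := by
    intro ω hω
    simp only [Set.mem_setOf_eq] at hω ⊢
    have hdiff : ∀ i : Fin n, |f (Z i ω) - L θ (Z i ω)| ≤ C * ‖δθ‖ := by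
      intro i
      have := hLipθ (θ + δθ) θ (Z i ω)
      rwa [add_sub_cancel_left] at this
    have h1 : |(1/(n:ℝ)) * ∑ i, f (Z i ω) - (1/(n:ℝ)) * ∑ i, L θ (Z i ω)| ≤ C * ‖δθ‖ := by
      rw [← mul_sub, ← Finset.sum_sub_distrib, abs_mul, abs_of_pos (by positivity : (0:ℝ) < 1/(n:ℝ))]
      have hsum : |∑ i, (f (Z i ω) - L θ (Z i ω))| ≤ (n:ℝ) * (C * ‖δθ‖) := by
        refine (Finset.abs_sum_le_sum_abs _ _).trans ?_
        calc ∑ i, |f (Z i ω) - L θ (Z i ω)| ≤ ∑ _i : Fin n, C * ‖δθ‖ :=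
              Finset.sum_le_sum fun i _ => hdiff i
          _ = (n:ℝ) * (C * ‖δθ‖) := by
              rw [Finset.sum_const, Finset.card_univ, Fintype.card_fin, nsmul_eq_mul]
      calc (1/(n:ℝ)) * |∑ i, (f (Z i ω) - L θ (Z i ω))|
          ≤ (1/(n:ℝ)) * ((n:ℝ) * (C * ‖δθ‖)) := by
            apply mul_le_mul_of_nonneg_left hsum (by positivity)
        _ = C * ‖δθ‖ := by field_simp
    have hClam : 0 ≤ C * lam := mul_nonneg hC hlam0
    calc |m - (1/(n:ℝ)) * ∑ i, L θ (Z i ω)|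
        ≤ |m - (1/(n:ℝ)) * ∑ i, f (Z i ω)|
          + |(1/(n:ℝ)) * ∑ i, f (Z i ω) - (1/(n:ℝ)) * ∑ i, L θ (Z i ω)| := by
          exact abs_sub_le _ _ _
      _ ≤ s0 + C * ‖δθ‖ := add_le_add hω h1
      _ ≤ C * lam + C * ‖δθ‖ + s0 := by linarith
  refine le_trans ?_ (measure_mono hsubset)
  -- step 2: measurable modification g of f
  have hfae : AEStronglyMeasurable f P := hInt.1
  set g : E → ℝ := hfae.mk f with hg_def
  have hg_meas : Measurable g := hfae.stronglyMeasurable_mk.measurable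
  have hfg : f =ᵐ[P] g := hfae.ae_eq_mk
  have hgae : ∀ i : Fin n, ∀ᵐ ω ∂μ, f (Z i ω) = g (Z i ω) := by
    intro i
    have h' : ∀ᵐ z ∂(μ.map (Z i)), f z = g z := by rw [hZlaw i]; exact hfg
    exact ae_of_ae_map (hZmeas i).aemeasurable h'
  have hall : ∀ᵐ ω ∂μ, ∀ i, f (Z i ω) = g (Z i ω) := ae_all_iff.mpr hgae
  have haeeq : {ω | |m - (1/(n:ℝ)) * ∑ i, g (Z i ω)| ≤ s0} =ᵐ[μ]
      {ω | |m - (1/(n:ℝ)) * ∑ i, f (Z i ω)| ≤ s0} := by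
    rw [Filter.eventuallyEq_set]
    filter_upwards [hall] with ω hω
    have hs : ∑ i, f (Z i ω) = ∑ i, g (Z i ω) := Finset.sum_congr rfl fun i _ => hω i
    simp only [Set.mem_setOf_eq, hs]
  rw [← measure_congr haeeq]
  -- handle M = 0 separately
  rcases hM.lt_or_eq with hMpos | hM0
  swap
  · -- M = 0 : f ≡ 0, everything trivial
    have hfz : ∀ z, f z = 0 := by
      intro z
      have := hbound z
      rw [← hM0] at this
      exact abs_eq_zero.mp (le_antisymm this (abs_nonneg _))
    have hm0 : m = 0 := by
      rw [hm_def]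
      have : f = fun _ => (0:ℝ) := funext hfz
      rw [this, integral_zero]
    have hgz : ∀ᵐ ω ∂μ, ∀ i, g (Z i ω) = 0 := by
      filter_upwards [hall] with ω hω i
      rw [← hω i, hfz]
    have hs0z : s0 = 0 := by rw [hs0_def, ← hM0, zero_mul]
    have huniv : {ω | |m - (1/(n:ℝ)) * ∑ i, g (Z i ω)| ≤ s0} =ᵐ[μ] (Set.univ : Set Ω) := by
      rw [Filter.eventuallyEq_set]
      filter_upwards [hgz] with ω hω
      simp only [Set.mem_setOf_eq, Set.mem_univ, iff_true]
      have : ∑ i, g (Z i ω) = 0 := Finset.sum_eq_zero fun i _ => hω i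
      rw [this, hm0, hs0z]
      simp
    rw [measure_congr huniv, measure_univ]
    exact ENNReal.ofReal_le_one.mpr (by linarith)
  -- main case: M > 0
  set W : Fin n → Ω → ℝ := fun i ω => g (Z i ω) - m with hW_def
  have hWmeas : ∀ i, Measurable (W i) := fun i => (hg_meas.comp (hZmeas i)).sub measurable_const
  have hWindep : iIndepFun W μ :=
    hZindep.comp (fun _ z => g z - m) (fun _ => hg_meas.sub measurable_const)
  have hgbound : ∀ᵐ z ∂P, |g z| ≤ M := by
    filter_upwards [hfg] with z hz
    rw [← hz]; exact hbound z
  have hWbound : ∀ i, ∀ᵐ ω ∂μ, W i ω ∈ Set.Icc (-M - m) (M - m) := by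
    intro i
    have h' : ∀ᵐ z ∂(μ.map (Z i)), |g z| ≤ M := by rw [hZlaw i]; exact hgbound
    filter_upwards [ae_of_ae_map (hZmeas i).aemeasurable h'] with ω hω
    rw [abs_le] at hω
    constructor
    · simp only [hW_def]; linarith [hω.1]
    · simp only [hW_def]; linarith [hω.2]
  have hgint : Integrable g P := hInt.congr hfg
  have hgm : ∫ z, g z ∂P = m := by
    rw [hm_def]
    exact (integral_congr_ae hfg).symm
  have hgZint : ∀ i, Integrable (fun ω => g (Z i ω)) μ := by
    intro i
    have : Integrable g (μ.map (Z i)) := by rw [hZlaw i]; exact hgint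
    exact (integrable_map_measure hg_meas.aestronglyMeasurable (hZmeas i).aemeasurable).mp this
  have hWint : ∀ i, Integrable (W i) μ := fun i => (hgZint i).sub (integrable_const m)
  have hWmean : ∀ i, ∫ ω, W i ω ∂μ = 0 := by
    intro i
    simp only [hW_def]
    rw [integral_sub (hgZint i) (integrable_const m), integral_const, probReal_univ,
      one_smul]
    have : ∫ ω, g (Z i ω) ∂μ = ∫ z, g z ∂P := by
      rw [← hZlaw i]
      exact (integral_map (hZmeas i).aemeasurable hg_meas.aestronglyMeasurable).symm
    rw [this, hgm, sub_self]
  have hWexpint : ∀ (t : ℝ) i, Integrable (fun ω => Real.exp (t * W i ω)) μ := fun t i =>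
    integrable_exp_bdd (hWint i).aestronglyMeasurable (hWbound i) t
  have hmgf_le : ∀ (t : ℝ) (i : Fin n), mgf (W i) μ t ≤ Real.exp (t^2 * (2*M)^2/8) := by
    intro t i
    have h := hoeffding_mgf μ (W i) (-M - m) (M - m) t (hWint i) (hWmean i) (hWbound i)
    have harg : (M - m - (-M - m))^2 = (2*M)^2 := by ring_nf
    rw [harg] at h
    exact h
  have hmgf_sum_le : ∀ (t : ℝ), mgf (∑ i, W i) μ t ≤ Real.exp ((n:ℝ) * (t^2 * (2*M)^2/8)) := by
    intro t
    rw [hWindep.mgf_sum hWmeas Finset.univ]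
    calc ∏ i, mgf (W i) μ t ≤ ∏ _i : Fin n, Real.exp (t^2 * (2*M)^2/8) :=
          Finset.prod_le_prod (fun i _ => mgf_nonneg) (fun i _ => hmgf_le t i)
      _ = Real.exp ((n:ℝ) * (t^2 * (2*M)^2/8)) := by
          rw [Finset.prod_const, Finset.card_univ, Fintype.card_fin, ← Real.exp_nat_mul]
  have hSmeas : Measurable (∑ i, W i) := by
    have : (∑ i, W i) = fun ω => ∑ i, W i ω := by
      funext ω; exact Finset.sum_apply ω Finset.univ W
    rw [this]
    exact Finset.measurable_sum _ fun i _ => hWmeas i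
  have hSexpint : ∀ (t : ℝ), Integrable (fun ω => Real.exp (t * (∑ i, W i) ω)) μ :=
    fun t => hWindep.integrable_exp_mul_sum hWmeas (fun i _ => hWexpint t i)
  -- parameters
  set t0 : ℝ := s0 / M^2 with ht0_def
  set ε : ℝ := (n:ℝ) * s0 with hε_def
  have hs0_pos : 0 < s0 := mul_pos hMpos (Real.sqrt_pos.mpr hv_pos)
  have ht0_pos : 0 < t0 := div_pos hs0_pos (by positivity)
  have hs0sq : s0^2 = M^2 * v := by
    rw [hs0_def, mul_pow, Real.sq_sqrt hv_pos.le]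
  have hnv : (n:ℝ) * v = 2*N*Real.log 2 + 2*Real.log (1/η) := by
    rw [hv_def]
    field_simp
  have hexp_eq : -t0 * ε + (n:ℝ) * (t0^2 * (2*M)^2/8) = -((N:ℝ)*Real.log 2 + Real.log (1/η)) := by
    have h1 : -t0 * ε + (n:ℝ) * (t0^2 * (2*M)^2/8) = -((n:ℝ) * s0^2)/(2*M^2) := by
      rw [ht0_def, hε_def]
      field_simp
      ring
    rw [h1, hs0sq]
    have h2 : -((n:ℝ) * (M^2 * v))/(2*M^2) = -((n:ℝ) * v)/2 := by
      field_simp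
    rw [h2, hnv]
    ring
  have htail : Real.exp (-((N:ℝ)*Real.log 2 + Real.log (1/η))) ≤ η/2 := by
    rw [neg_add, Real.exp_add]
    have he1 : Real.exp (-(Real.log (1/η))) = η := by
      rw [one_div, Real.log_inv, neg_neg, Real.exp_log hη]
    have he2 : Real.exp (-((N:ℝ)*Real.log 2)) ≤ 1/2 := by
      have : -((N:ℝ)*Real.log 2) ≤ -(Real.log 2) := by nlinarith
      calc Real.exp (-((N:ℝ)*Real.log 2)) ≤ Real.exp (-(Real.log 2)) := Real.exp_le_exp.mpr this
        _ = 1/2 := by rw [Real.exp_neg, Real.exp_log two_pos, one_div]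
    rw [he1]
    calc Real.exp (-((N:ℝ)*Real.log 2)) * η ≤ (1/2) * η :=
          mul_le_mul_of_nonneg_right he2 hη.le
      _ = η/2 := by ring
  -- Chernoff, both tails
  have hup : (μ {ω | ε ≤ (∑ i, W i) ω}).toReal ≤ η/2 := by
    have h := measure_ge_le_exp_mul_mgf (μ := μ) (X := ∑ i, W i) ε ht0_pos.le (hSexpint t0)
    refine h.trans ?_
    calc Real.exp (-t0 * ε) * mgf (∑ i, W i) μ t0
        ≤ Real.exp (-t0 * ε) * Real.exp ((n:ℝ) * (t0^2 * (2*M)^2/8)) :=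
          mul_le_mul_of_nonneg_left (hmgf_sum_le t0) (Real.exp_pos _).le
      _ = Real.exp (-t0 * ε + (n:ℝ) * (t0^2 * (2*M)^2/8)) := (Real.exp_add _ _).symm
      _ ≤ η/2 := by rw [hexp_eq]; exact htail
  have hlo : (μ {ω | (∑ i, W i) ω ≤ -ε}).toReal ≤ η/2 := by
    have h := measure_le_le_exp_mul_mgf (μ := μ) (X := ∑ i, W i) (-ε)
      (neg_nonpos.mpr ht0_pos.le) (hSexpint (-t0))
    refine h.trans ?_
    calc Real.exp (-(-t0) * (-ε)) * mgf (∑ i, W i) μ (-t0)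
        ≤ Real.exp (-(-t0) * (-ε)) * Real.exp ((n:ℝ) * ((-t0)^2 * (2*M)^2/8)) :=
          mul_le_mul_of_nonneg_left (hmgf_sum_le (-t0)) (Real.exp_pos _).le
      _ = Real.exp (-t0 * ε + (n:ℝ) * (t0^2 * (2*M)^2/8)) := by
          rw [← Real.exp_add]; ring_nf
      _ ≤ η/2 := by rw [hexp_eq]; exact htail
  -- combine
  set A : Set Ω := {ω | ε ≤ (∑ i, W i) ω} ∪ {ω | (∑ i, W i) ω ≤ -ε} with hA_def
  have hA_meas : MeasurableSet A :=
    (measurableSet_le measurable_const hSmeas).union (measurableSet_le hSmeas measurable_const)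
  have hμA : μ A ≤ ENNReal.ofReal η := by
    calc μ A ≤ μ {ω | ε ≤ (∑ i, W i) ω} + μ {ω | (∑ i, W i) ω ≤ -ε} := measure_union_le _ _
      _ ≤ ENNReal.ofReal (η/2) + ENNReal.ofReal (η/2) := by
          gcongr
          · rw [← ENNReal.ofReal_toReal (measure_ne_top μ _)]
            exact ENNReal.ofReal_le_ofReal hup
          · rw [← ENNReal.ofReal_toReal (measure_ne_top μ _)]
            exact ENNReal.ofReal_le_ofReal hlo
      _ = ENNReal.ofReal η := by
          rw [← ENNReal.ofReal_add (by linarith) (by linarith)]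
          norm_num
  have hAc : Aᶜ ⊆ {ω | |m - (1/(n:ℝ)) * ∑ i, g (Z i ω)| ≤ s0} := by
    intro ω hω
    simp only [hA_def, Set.mem_union, Set.mem_compl_iff, not_or, Set.mem_setOf_eq, not_le] at hω
    obtain ⟨h1, h2⟩ := hω
    have hsum : (∑ i, W i) ω = (∑ i, g (Z i ω)) - (n:ℝ) * m := by
      rw [Finset.sum_apply]
      simp only [hW_def]
      rw [Finset.sum_sub_distrib, Finset.sum_const, Finset.card_univ, Fintype.card_fin,
        nsmul_eq_mul]
    rw [Set.mem_setOf_eq]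
    have heq : m - (1/(n:ℝ)) * ∑ i, g (Z i ω) = -((∑ i, W i) ω) / n := by
      rw [hsum]
      field_simp
      ring
    rw [heq, abs_div, abs_of_pos hnpos, div_le_iff₀ hnpos, abs_neg, abs_le]
    rw [hsum] at h1 h2
    constructor
    · rw [hε_def] at h2; linarith
    · rw [hε_def] at h1; linarith
  calc ENNReal.ofReal (1 - η) = 1 - ENNReal.ofReal η := by
        rw [ENNReal.ofReal_sub 1 hη.le, ENNReal.ofReal_one]
    _ ≤ 1 - μ A := tsub_le_tsub_left hμA 1
    _ = μ Aᶜ := (prob_compl_eq_one_sub hA_meas).symm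
    _ ≤ μ {ω | |m - (1/(n:ℝ)) * ∑ i, g (Z i ω)| ≤ s0} := measure_mono hAc
end
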